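/- Let F be a field with char(F) ≠ 2 and let A = M_d(F). If M is an F-linear subspace of A such that M·Aᵗ + A·M ∈ M for all M ∈ M and all A ∈ A, then M is either 0, the set K of skew-symmetric matrices, the set S of symmetric matrices, or A. -/

import Mathlib

open Matrix

section Stmt6Aux

variable {F : Type*} [Field F] {d : ℕ}

private lemma stmt6_tE (i j : Fin d) :
    (Matrix.single i j (1:F))ᵀ = Matrix.single j i 1 := by
  ext r s; simp [Matrix.single, and_comm]

private lemma stmt6_EmE (m : Matrix (Fin d) (Fin d) F) (i j p q : Fin d) :
    Matrix.single i j 1 * m * Matrix.single p q 1 = m j p • Matrix.single i q 1 := by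
  ext r s
  simp [mul_apply, Matrix.single, ite_and, Finset.sum_ite_eq, Finset.sum_ite_eq',
    mul_ite, ite_mul, mul_zero, zero_mul, Finset.mul_sum, Finset.sum_mul]
  split_ifs <;> simp_all

private lemma stmt6_key {M : Submodule F (Matrix (Fin d) (Fin d) F)}
    (hM : ∀ m ∈ M, ∀ a : Matrix (Fin d) (Fin d) F, m * aᵀ + a * m ∈ M)
    {m} (hm : m ∈ M) (a b c e : Fin d) (h : e ≠ a) :
    m e b • Matrix.single c a (1:F) + m b e • Matrix.single a c 1 ∈ M := by
  have h1 := hM m hm (Matrix.single a b 1)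
  have h2 := hM _ h1 (Matrix.single c e 1)
  have heq : (m * (Matrix.single a b (1:F))ᵀ + Matrix.single a b 1 * m) *
        (Matrix.single c e (1:F))ᵀ +
      Matrix.single c e 1 * (m * (Matrix.single a b (1:F))ᵀ + Matrix.single a b 1 * m)
      = m e b • Matrix.single c a 1 + m b e • Matrix.single a c 1 := by
    rw [stmt6_tE, stmt6_tE]
    rw [add_mul, mul_add]
    rw [mul_assoc m, Matrix.single_mul_single_of_ne _ _ _ _ h.symm, mul_zero]
    rw [← mul_assoc (Matrix.single c e 1), ← mul_assoc (Matrix.single c e 1),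
      Matrix.single_mul_single_of_ne _ _ _ _ h, zero_mul]
    rw [stmt6_EmE, stmt6_EmE]
    abel
  rw [heq] at h2
  exact h2

private lemma stmt6_rep1 (x : Matrix (Fin d) (Fin d) F) :
    ∑ p, ∑ q, x p q • Matrix.single p q (1:F) = x := by
  conv_rhs => rw [matrix_eq_sum_single x]
  simp [smul_single]

private lemma stmt6_rep2 (x : Matrix (Fin d) (Fin d) F) :
    ∑ p, ∑ q, x p q • Matrix.single q p (1:F) = xᵀ := by
  rw [Finset.sum_comm]
  conv_rhs => rw [← stmt6_rep1 xᵀ]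
  simp [transpose_apply]

private lemma stmt6_span_sym {M : Submodule F (Matrix (Fin d) (Fin d) F)}
    (h2 : (2:F) ≠ 0)
    (hE : ∀ p q, Matrix.single p q (1:F) + Matrix.single q p 1 ∈ M) :
    ∀ x : Matrix (Fin d) (Fin d) F, xᵀ = x → x ∈ M := by
  intro x hx
  have hs : x + xᵀ ∈ M := by
    have : x + xᵀ = ∑ p, ∑ q, x p q • (Matrix.single p q (1:F) + Matrix.single q p 1) := by
      simp only [smul_add, Finset.sum_add_distrib, stmt6_rep1, stmt6_rep2]
    rw [this]
    exact Submodule.sum_mem _ fun p _ => Submodule.sum_mem _ fun q _ =>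
      M.smul_mem _ (hE p q)
  rw [hx] at hs
  have hxx : x = (2⁻¹ : F) • (x + x) := by
    rw [← two_smul F x, smul_smul, inv_mul_cancel₀ h2, one_smul]
  rw [hxx]; exact M.smul_mem _ hs

private lemma stmt6_span_skew {M : Submodule F (Matrix (Fin d) (Fin d) F)}
    (h2 : (2:F) ≠ 0)
    (hE : ∀ p q, Matrix.single p q (1:F) - Matrix.single q p 1 ∈ M) :
    ∀ x : Matrix (Fin d) (Fin d) F, xᵀ = -x → x ∈ M := by
  intro x hx
  have hs : x - xᵀ ∈ M := by
    have : x - xᵀ = ∑ p, ∑ q, x p q • (Matrix.single p q (1:F) - Matrix.single q p 1) := by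
      simp only [smul_sub, Finset.sum_sub_distrib, stmt6_rep1, stmt6_rep2]
    rw [this]
    exact Submodule.sum_mem _ fun p _ => Submodule.sum_mem _ fun q _ =>
      M.smul_mem _ (hE p q)
  rw [hx, sub_neg_eq_add] at hs
  have hxx : x = (2⁻¹ : F) • (x + x) := by
    rw [← two_smul F x, smul_smul, inv_mul_cancel₀ h2, one_smul]
  rw [hxx]; exact M.smul_mem _ hs

private lemma stmt6_half1 (h2 : (2:F) ≠ 0) (x y : Matrix (Fin d) (Fin d) F) :
    x - (2⁻¹:F) • (x + y) = (2⁻¹:F) • (x - y) := by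
  ext p q
  have h2' : (2⁻¹:F) + 2⁻¹ = 1 := by rw [← two_mul, mul_inv_cancel₀ h2]
  simp only [Matrix.sub_apply, Matrix.add_apply, Matrix.smul_apply, smul_eq_mul]
  linear_combination (-(x p q)) * h2'

private lemma stmt6_half2 (h2 : (2:F) ≠ 0) (x y : Matrix (Fin d) (Fin d) F) :
    x - (2⁻¹:F) • (x - y) = (2⁻¹:F) • (x + y) := by
  ext p q
  have h2' : (2⁻¹:F) + 2⁻¹ = 1 := by rw [← two_mul, mul_inv_cancel₀ h2]
  simp only [Matrix.sub_apply, Matrix.add_apply, Matrix.smul_apply, smul_eq_mul]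
  linear_combination (-(x p q)) * h2'

private lemma stmt6_sym_all {M : Submodule F (Matrix (Fin d) (Fin d) F)}
    (hM : ∀ m ∈ M, ∀ a : Matrix (Fin d) (Fin d) F, m * aᵀ + a * m ∈ M)
    (hd : 2 ≤ d) (h2 : (2:F) ≠ 0)
    {s} (hs : s ∈ M) (hsym : sᵀ = s) (hs0 : s ≠ 0) :
    ∀ x : Matrix (Fin d) (Fin d) F, xᵀ = x → x ∈ M := by
  haveI : Nontrivial (Fin d) := Fin.nontrivial_iff_two_le.mpr hd
  obtain ⟨i, j, hij⟩ : ∃ i j, s i j ≠ 0 := by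
    by_contra h; push_neg at h; exact hs0 (by ext p q; simpa using h p q)
  have hsji : s j i = s i j := by
    have := congrFun (congrFun hsym i) j
    simpa [transpose_apply] using this
  have base : ∀ p q : Fin d, q ≠ i →
      Matrix.single p q (1:F) + Matrix.single q p 1 ∈ M := by
    intro p q hq
    have hk := stmt6_key hM hs q j p i (Ne.symm hq)
    rw [hsji] at hk
    have hmem : s i j • (Matrix.single p q (1:F) + Matrix.single q p 1) ∈ M := by
      rw [smul_add]; exact hk
    have := M.smul_mem (s i j)⁻¹ hmem
    rwa [smul_smul, inv_mul_cancel₀ hij, one_smul] at this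
  have hEpair : ∀ p q : Fin d,
      Matrix.single p q (1:F) + Matrix.single q p 1 ∈ M := by
    intro p q
    by_cases hq : q = i
    · rw [hq]
      by_cases hp : p = i
      · rw [hp]
        obtain ⟨a, ha⟩ := exists_ne i
        have h1 : Matrix.single i a (1:F) + Matrix.single a i 1 ∈ M := base i a ha
        have h2' := hM _ h1 (Matrix.single i a 1)
        have heq : (Matrix.single i a (1:F) + Matrix.single a i 1) *
              (Matrix.single i a (1:F))ᵀ +
            Matrix.single i a 1 * (Matrix.single i a (1:F) + Matrix.single a i 1)
            = Matrix.single i i (1:F) + Matrix.single i i 1 := by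
          rw [stmt6_tE, add_mul, mul_add,
            Matrix.single_mul_single_same,
            Matrix.single_mul_single_of_ne _ _ _ _ (Ne.symm ha),
            Matrix.single_mul_single_of_ne _ _ _ _ ha]
          simp
        rw [heq] at h2'
        exact h2'
      · rw [add_comm]; exact base i p hp
    · exact base p q hq
  exact stmt6_span_sym h2 hEpair

private lemma stmt6_skew_all {M : Submodule F (Matrix (Fin d) (Fin d) F)}
    (hM : ∀ m ∈ M, ∀ a : Matrix (Fin d) (Fin d) F, m * aᵀ + a * m ∈ M)
    (h2 : (2:F) ≠ 0)
    {k} (hk : k ∈ M) (hskew : kᵀ = -k) (hk0 : k ≠ 0) :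
    ∀ x : Matrix (Fin d) (Fin d) F, xᵀ = -x → x ∈ M := by
  obtain ⟨i, j, hij⟩ : ∃ i j, k i j ≠ 0 := by
    by_contra h; push_neg at h; exact hk0 (by ext p q; simpa using h p q)
  have hkji : k j i = -k i j := by
    have := congrFun (congrFun hskew i) j
    simpa [transpose_apply] using this
  have hne : i ≠ j := by
    rintro rfl
    have h0 : k i i = -k i i := hkji
    have : (2:F) * k i i = 0 := by linear_combination h0
    rcases mul_eq_zero.mp this with h' | h'
    · exact h2 h'
    · exact hij h'
  have hEpair : ∀ p q : Fin d,
      Matrix.single p q (1:F) - Matrix.single q p 1 ∈ M := by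
    intro p q
    by_cases hq : q = i
    · rw [hq]
      have hkmem := stmt6_key hM hk i i p j hne.symm
      have hmem : k j i • (Matrix.single p i (1:F) - Matrix.single i p 1) ∈ M := by
        rw [smul_sub, sub_eq_add_neg, ← neg_smul,
          show -(k j i) = k i j by rw [hkji, neg_neg]]
        exact hkmem
      have hji0 : k j i ≠ 0 := by rw [hkji]; exact neg_ne_zero.mpr hij
      have := M.smul_mem (k j i)⁻¹ hmem
      rwa [smul_smul, inv_mul_cancel₀ hji0, one_smul] at this
    · have hkmem := stmt6_key hM hk q j p i (Ne.symm hq)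
      rw [hkji, neg_smul] at hkmem
      have hmem : k i j • (Matrix.single p q (1:F) - Matrix.single q p 1) ∈ M := by
        rw [smul_sub, sub_eq_add_neg]
        exact hkmem
      have := M.smul_mem (k i j)⁻¹ hmem
      rwa [smul_smul, inv_mul_cancel₀ hij, one_smul] at this
  exact stmt6_span_skew h2 hEpair

end Stmt6Aux

/-- **Lemma 3.7 (after Montgomery).** Let `F` be a field with `char F ≠ 2` and
`A = M_d(F)`.  If `M` is an `F`-linear subspace of `A` such that `m·aᵀ + a·m ∈ M` for
all `m ∈ M` and `a ∈ A`, then `M` is either `0`, the skew-symmetric matrices `K`,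
the symmetric matrices `S`, or `A`. -/
theorem stmt_6 (F : Type*) [Field F] (hchar : ringChar F ≠ 2) (d : ℕ)
    (M : Submodule F (Matrix (Fin d) (Fin d) F))
    (hM : ∀ m ∈ M, ∀ a : Matrix (Fin d) (Fin d) F, m * aᵀ + a * m ∈ M) :
    M = ⊥ ∨
    (M : Set (Matrix (Fin d) (Fin d) F)) = {x | xᵀ = -x} ∨
    (M : Set (Matrix (Fin d) (Fin d) F)) = {x | xᵀ = x} ∨
    M = ⊤ := by
  have h2 : (2:F) ≠ 0 := Ring.two_ne_zero hchar
  rcases Nat.lt_or_ge d 2 with hd | hd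
  · -- d = 0 or d = 1
    interval_cases d
    · -- d = 0
      left
      have hz : ∀ x : Matrix (Fin 0) (Fin 0) F, x = 0 := by
        intro x; ext i _; exact i.elim0
      ext x; rw [hz x]; simp
    · -- d = 1
      by_cases hbot : M = ⊥
      · left; exact hbot
      · right; right; right
        obtain ⟨m, hm, hm0⟩ := (Submodule.ne_bot_iff M).mp hbot
        have hm00 : m 0 0 ≠ 0 := by
          intro h; apply hm0; ext i j; fin_cases i; fin_cases j; exact h
        rw [eq_top_iff]
        rintro x -
        have hx : x = (x 0 0 * (m 0 0)⁻¹) • m := by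
          ext i j; fin_cases i; fin_cases j
          simp [Matrix.smul_apply]
          field_simp
        rw [hx]
        exact M.smul_mem _ hm
  · -- d ≥ 2
    haveI : Nontrivial (Fin d) := Fin.nontrivial_iff_two_le.mpr hd
    by_cases hbot : M = ⊥
    · left; exact hbot
    obtain ⟨m, hm, hm0⟩ := (Submodule.ne_bot_iff M).mp hbot
    have hB : (∃ s ∈ M, sᵀ = s ∧ s ≠ 0) ∨ (∃ k ∈ M, kᵀ = -k ∧ k ≠ 0) := by
      by_cases hsk : mᵀ = -m
      · right; exact ⟨m, hm, hsk, hm0⟩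
      · left
        obtain ⟨i, j, hij⟩ : ∃ i j, m i j + m j i ≠ 0 := by
          by_contra h; push_neg at h
          apply hsk
          ext p q
          have := h q p
          simp only [transpose_apply, neg_apply, Matrix.neg_apply]
          linear_combination this
        obtain ⟨a, ha⟩ := exists_ne i
        have hk := stmt6_key hM hm a j a i (Ne.symm ha)
        refine ⟨(m i j + m j i) • Matrix.single a a 1, ?_, ?_, ?_⟩
        · rw [add_smul]; exact hk
        · rw [transpose_smul, stmt6_tE]
        · refine smul_ne_zero hij ?_
          intro h
          have := congrFun (congrFun h a) a
          simp [Matrix.single_apply_same] at this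
    have htop : (∀ x : Matrix (Fin d) (Fin d) F, xᵀ = x → x ∈ M) →
        (∀ x : Matrix (Fin d) (Fin d) F, xᵀ = -x → x ∈ M) → M = ⊤ := by
      intro hS hK
      rw [eq_top_iff]; rintro x -
      have hxs : (2⁻¹:F) • (x + xᵀ) ∈ M :=
        M.smul_mem _ (hS _ (by rw [transpose_add, transpose_transpose, add_comm]))
      have hxk : (2⁻¹:F) • (x - xᵀ) ∈ M :=
        M.smul_mem _ (hK _ (by rw [transpose_sub, transpose_transpose, neg_sub]))
      have hx : x = (2⁻¹:F) • (x + xᵀ) + (2⁻¹:F) • (x - xᵀ) := by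
        rw [← smul_add, add_add_sub_cancel, ← two_smul F, smul_smul,
          inv_mul_cancel₀ h2, one_smul]
      rw [hx]; exact M.add_mem hxs hxk
    rcases hB with ⟨s, hs, hsym, hs0⟩ | ⟨k, hk, hskew, hk0⟩
    · have hS := stmt6_sym_all hM hd h2 hs hsym hs0
      by_cases hKex : ∃ k ∈ M, kᵀ = -k ∧ k ≠ 0
      · obtain ⟨k, hk, hskew, hk0⟩ := hKex
        exact Or.inr (Or.inr (Or.inr (htop hS (stmt6_skew_all hM h2 hk hskew hk0))))
      · right; right; left
        ext x
        simp only [SetLike.mem_coe, Set.mem_setOf_eq]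
        constructor
        · intro hx
          have hq : (2⁻¹:F) • (x + xᵀ) ∈ M :=
            M.smul_mem _ (hS _ (by rw [transpose_add, transpose_transpose, add_comm]))
          have hxeq : x - (2⁻¹:F) • (x + xᵀ) = (2⁻¹:F) • (x - xᵀ) :=
            stmt6_half1 h2 x xᵀ
          have hp : (2⁻¹:F) • (x - xᵀ) ∈ M := by
            rw [← hxeq]; exact M.sub_mem hx hq
          have hpt : ((2⁻¹:F) • (x - xᵀ))ᵀ = -((2⁻¹:F) • (x - xᵀ)) := by
            rw [transpose_smul, transpose_sub, transpose_transpose, ← smul_neg, neg_sub]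
          have hp0 : (2⁻¹:F) • (x - xᵀ) = 0 := by
            by_contra hne
            exact hKex ⟨_, hp, hpt, hne⟩
          rcases smul_eq_zero.mp hp0 with h' | h'
          · exact absurd h' (inv_ne_zero h2)
          · exact (sub_eq_zero.mp h').symm
        · intro hx; exact hS x hx
    · have hK := stmt6_skew_all hM h2 hk hskew hk0
      by_cases hSex : ∃ s ∈ M, sᵀ = s ∧ s ≠ 0
      · obtain ⟨s, hs, hsym, hs0⟩ := hSex
        exact Or.inr (Or.inr (Or.inr (htop (stmt6_sym_all hM hd h2 hs hsym hs0) hK)))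
      · right; left
        ext x
        simp only [SetLike.mem_coe, Set.mem_setOf_eq]
        constructor
        · intro hx
          have hq : (2⁻¹:F) • (x - xᵀ) ∈ M :=
            M.smul_mem _ (hK _ (by rw [transpose_sub, transpose_transpose, neg_sub]))
          have hxeq : x - (2⁻¹:F) • (x - xᵀ) = (2⁻¹:F) • (x + xᵀ) :=
            stmt6_half2 h2 x xᵀ
          have hp : (2⁻¹:F) • (x + xᵀ) ∈ M := by
            rw [← hxeq]; exact M.sub_mem hx hq
          have hpt : ((2⁻¹:F) • (x + xᵀ))ᵀ = (2⁻¹:F) • (x + xᵀ) := by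
            rw [transpose_smul, transpose_add, transpose_transpose, add_comm]
          have hp0 : (2⁻¹:F) • (x + xᵀ) = 0 := by
            by_contra hne
            exact hSex ⟨_, hp, hpt, hne⟩
          rcases smul_eq_zero.mp hp0 with h' | h'
          · exact absurd h' (inv_ne_zero h2)
          · exact eq_neg_of_add_eq_zero_right h'
        · intro hx; exact hK x hx
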